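/- Suppose Γ is an E-complete maximally tableau FOLP_CS-consistent set of closed Par-formulas, and let E be defined by E(t) = { A : ¬t:_{Par(A)} A ∉ Γ }. Then E satisfies condition E4: if A ∈ E(t) and Par(A) ⊆ X ⊆ Par, then t:_X A ∈ E(!t). -/

import Mathlib

open scoped Classical

/-- Justification terms of FOLP, built from justification variables `jvar i`,
justification constants `jconst i`, and the operations `+`, `·`, `!`, `genₓ`. -/
inductive Tm : Type
  | jvar : ℕ → Tm
  | jconst : ℕ → Tm
  | plus : Tm → Tm → Tm
  | app : Tm → Tm → Tm
  | bang : Tm → Tm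
  | gen : ℕ → Tm → Tm
  deriving DecidableEq

/-- FOLP formulas with extra individual constants from `K` (`K`-formulas).
Individual variables are natural numbers; an argument `Sum.inl x` is an individual
variable, `Sum.inr a` is an element of `K`.  Predicate symbols are indexed by `ℕ`.
Plain FOLP formulas are `Fm Empty`, Par-formulas are `Fm ℕ` (the parameters being a
separate copy of ℕ, namely the `Sum.inr` part), and `D`-formulas are `Fm D`.
`just t X A` is the justification assertion `t :_X A`. -/
inductive Fm (K : Type) : Type
  | pred : ℕ → List (ℕ ⊕ K) → Fm K
  | neg : Fm K → Fm K
  | imp : Fm K → Fm K → Fm K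
  | all : ℕ → Fm K → Fm K
  | ex : ℕ → Fm K → Fm K
  | just : Tm → Finset (ℕ ⊕ K) → Fm K → Fm K

namespace Fm

variable {K K' : Type}

/-- Free individual variables of a `K`-formula.  Recall that
`FVar (t :_X A) = X` (more precisely, the individual-variable part of `X`). -/
noncomputable def fvar : Fm K → Finset ℕ
  | pred _ args => (args.filterMap Sum.getLeft?).toFinset
  | neg A => A.fvar
  | imp A B => A.fvar ∪ B.fvar
  | all x A => A.fvar.erase x
  | ex x A => A.fvar.erase x
  | just _ X _ => (X.toList.filterMap Sum.getLeft?).toFinset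

/-- The elements of `K` occurring in a `K`-formula (for `K = Par` this is `Par(A)`,
for `K = D` this is `D(A)`). -/
noncomputable def kocc : Fm K → Finset K
  | pred _ args => (args.filterMap Sum.getRight?).toFinset
  | neg A => A.kocc
  | imp A B => A.kocc ∪ B.kocc
  | all _ A => A.kocc
  | ex _ A => A.kocc
  | just _ X A => A.kocc ∪ (X.toList.filterMap Sum.getRight?).toFinset

/-- A `K`-formula is closed if it contains no free occurrences of individual variables. -/
def Closed (A : Fm K) : Prop := A.fvar = ∅

/-- Action of a partial substitution (of elements of `K` for individual variables)
on variables/`K`-elements. -/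
def subK (σ : ℕ → Option K) : ℕ ⊕ K → ℕ ⊕ K
  | .inl x => (σ x).elim (.inl x) .inr
  | .inr a => .inr a

/-- Simultaneous substitution of elements of `K` for free individual variables.
In `t :_X A` only the variables belonging to `X` are free, so only those get
substituted (both inside `X` and inside `A`). -/
noncomputable def msubst (σ : ℕ → Option K) : Fm K → Fm K
  | pred Q args => pred Q (args.map (subK σ))
  | neg A => neg (A.msubst σ)
  | imp A B => imp (A.msubst σ) (B.msubst σ)
  | all x A => all x (A.msubst fun y => if y = x then none else σ y)
  | ex x A => ex x (A.msubst fun y => if y = x then none else σ y)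
  | just t X A =>
      just t (X.image (subK σ)) (A.msubst fun y => if Sum.inl y ∈ X then σ y else none)

/-- `A.subst1 x a` is `A(a)`, i.e. `A{x/a}`: the result of replacing all free
occurrences of the individual variable `x` by the element `a : K`. -/
noncomputable def subst1 (x : ℕ) (a : K) (A : Fm K) : Fm K :=
  A.msubst fun y => if y = x then some a else none

/-- Action of a variable-for-variable substitution on arguments. -/
def subVV (x y : ℕ) : ℕ ⊕ K → ℕ ⊕ K
  | .inl z => if z = x then .inl y else .inl z
  | .inr a => .inr a

/-- `A.vsubst x y` is `A{x/y}`: substitution of the individual variable `y` for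
the free occurrences of the individual variable `x`. -/
noncomputable def vsubst (x y : ℕ) : Fm K → Fm K
  | pred Q args => pred Q (args.map (subVV x y))
  | neg A => neg (A.vsubst x y)
  | imp A B => imp (A.vsubst x y) (B.vsubst x y)
  | all z A => if z = x then all z A else all z (A.vsubst x y)
  | ex z A => if z = x then ex z A else ex z (A.vsubst x y)
  | just t X A =>
      if Sum.inl x ∈ X then just t (X.image (subVV x y)) (A.vsubst x y) else just t X A

/-- `FreeFor y x A`: the variable `y` is substitutable for the variable `x` in `A`
(no free occurrence of `x` lies in the scope of a quantifier binding `y`). -/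
def FreeFor (y x : ℕ) : Fm K → Prop
  | pred _ _ => True
  | neg A => FreeFor y x A
  | imp A B => FreeFor y x A ∧ FreeFor y x B
  | all z A => x = z ∨ x ∉ A.fvar ∨ (y ≠ z ∧ FreeFor y x A)
  | ex z A => x = z ∨ x ∉ A.fvar ∨ (y ≠ z ∧ FreeFor y x A)
  | just _ X A => Sum.inl x ∈ X → FreeFor y x A

/-- Action of a renaming on arguments. -/
def subR (σ : ℕ → ℕ) : ℕ ⊕ K → ℕ ⊕ K
  | .inl x => .inl (σ x)
  | .inr a => .inr a

/-- Renaming of all (free and bound) individual variables. -/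
noncomputable def rename (σ : ℕ → ℕ) : Fm K → Fm K
  | pred Q args => pred Q (args.map (subR σ))
  | neg A => neg (A.rename σ)
  | imp A B => imp (A.rename σ) (B.rename σ)
  | all x A => all (σ x) (A.rename σ)
  | ex x A => ex (σ x) (A.rename σ)
  | just t X A => just t (X.image (subR σ)) (A.rename σ)

/-- Mapping the extra individual constants of a `K`-formula along `f : K → K'`. -/
noncomputable def kmap (f : K → K') : Fm K → Fm K'
  | pred Q args => pred Q (args.map (Sum.map id f))
  | neg A => neg (A.kmap f)
  | imp A B => imp (A.kmap f) (B.kmap f)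
  | all x A => all x (A.kmap f)
  | ex x A => ex x (A.kmap f)
  | just t X A => just t (X.image (Sum.map id f)) (A.kmap f)

/-- A size measure used for the well-founded recursion defining truth. -/
noncomputable def size : Fm K → ℕ
  | pred _ _ => 0
  | neg A => A.size + 1
  | imp A B => A.size + B.size + 1
  | all _ A => A.size + 1
  | ex _ A => A.size + 1
  | just _ _ A => A.size + A.fvar.card + 1


theorem fvar_msubst_subset (σ : ℕ → Option K) (A : Fm K) :
    (A.msubst σ).fvar ⊆ A.fvar := by
  induction A generalizing σ with
  | pred Q args =>
      intro y hy
      simp only [msubst, fvar, List.mem_toFinset, List.mem_filterMap, List.mem_map] at hy ⊢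
      obtain ⟨s, ⟨a, ha, rfl⟩, hget⟩ := hy
      cases a with
      | inl z =>
          cases hσ : σ z with
          | none =>
              simp [subK, hσ] at hget
              exact ⟨Sum.inl z, ha, by simp [hget]⟩
          | some b => simp [subK, hσ] at hget
      | inr b => simp [subK] at hget
  | neg A ih => exact ih σ
  | imp A B ihA ihB =>
      simp only [msubst, fvar]
      exact Finset.union_subset_union (ihA σ) (ihB σ)
  | all x A ih =>
      simp only [msubst, fvar]
      exact Finset.erase_subset_erase x (ih _)
  | ex x A ih =>
      simp only [msubst, fvar]
      exact Finset.erase_subset_erase x (ih _)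
  | just t X A ih =>
      intro y hy
      simp only [msubst, fvar, List.mem_toFinset, List.mem_filterMap,
        Finset.mem_toList, Finset.mem_image] at hy ⊢
      obtain ⟨s, ⟨a, ha, rfl⟩, hget⟩ := hy
      cases a with
      | inl z =>
          cases hσ : σ z with
          | none =>
              refine ⟨Sum.inl z, ha, ?_⟩
              simp only [subK, hσ, Option.elim] at hget
              simpa using hget
          | some b => simp [subK, hσ] at hget
      | inr b => simp [subK] at hget

theorem size_msubst_le (σ : ℕ → Option K) (A : Fm K) :
    (A.msubst σ).size ≤ A.size := by
  induction A generalizing σ with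
  | pred Q args => simp [msubst, size]
  | neg A ih => simpa [msubst, size] using ih σ
  | imp A B ihA ihB =>
      simp only [msubst, size]
      have := ihA σ; have := ihB σ; omega
  | all x A ih => simpa [msubst, size] using ih _
  | ex x A ih => simpa [msubst, size] using ih _
  | just t X A ih =>
      simp only [msubst, size]
      have h1 := ih (fun y => if Sum.inl y ∈ X then σ y else none)
      have h2 := Finset.card_le_card
        (fvar_msubst_subset (fun y => if Sum.inl y ∈ X then σ y else none) A)
      omega

theorem size_subst1_le (x : ℕ) (a : K) (A : Fm K) : (A.subst1 x a).size ≤ A.size :=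
  size_msubst_le _ A


/-- `∀A`, the universal closure of `A`. -/
noncomputable def univClosure (A : Fm K) : Fm K :=
  (A.fvar.sort (· ≤ ·)).foldr Fm.all A

theorem size_foldr_all (l : List ℕ) (A : Fm K) :
    (l.foldr Fm.all A).size = A.size + l.length := by
  induction l with
  | nil => simp
  | cons z l ih => simp only [List.foldr, size, ih, List.length_cons]; omega

theorem size_univClosure (A : Fm K) :
    A.univClosure.size = A.size + A.fvar.card := by
  simp [univClosure, size_foldr_all, Finset.length_sort]

end Fm

/-- Embedding plain FOLP formulas into `K`-formulas. -/
noncomputable def toK {K : Type} : Fm Empty → Fm K := Fm.kmap (fun a => a.elim)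

/-- Two FOLP formulas are variable variants if each can be turned into the other
by a renaming of free and bound individual variables. -/
def VariableVariant (A B : Fm Empty) : Prop := ∃ σ : Equiv.Perm ℕ, B = A.rename σ

/-- The axioms of FOLP: a complete list of first order axiom schemes together
with the justification axiom schemes Ctr, Exp, Sum, jK, jT, j4, Gen. -/
inductive FOLPAxiom : Fm Empty → Prop
  | p1 (A B : Fm Empty) : FOLPAxiom (A.imp (B.imp A))
  | p2 (A B C : Fm Empty) : FOLPAxiom ((A.imp (B.imp C)).imp ((A.imp B).imp (A.imp C)))
  | p3 (A B : Fm Empty) : FOLPAxiom (((A.neg).imp (B.neg)).imp (B.imp A))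
  | allElim (x y : ℕ) (A : Fm Empty) : Fm.FreeFor y x A → FOLPAxiom ((Fm.all x A).imp (A.vsubst x y))
  | allImp (x : ℕ) (A B : Fm Empty) : x ∉ A.fvar →
      FOLPAxiom ((Fm.all x (A.imp B)).imp (A.imp (Fm.all x B)))
  | exIntro (x y : ℕ) (A : Fm Empty) : Fm.FreeFor y x A → FOLPAxiom ((A.vsubst x y).imp (Fm.ex x A))
  | exElim (x : ℕ) (A B : Fm Empty) : x ∉ B.fvar →
      FOLPAxiom ((Fm.all x (A.imp B)).imp ((Fm.ex x A).imp B))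
  | ctr (t : Tm) (X : Finset (ℕ ⊕ Empty)) (A : Fm Empty) (y : ℕ) : Sum.inl y ∉ X → y ∉ A.fvar →
      FOLPAxiom ((Fm.just t (insert (Sum.inl y) X) A).imp (Fm.just t X A))
  | exp (t : Tm) (X : Finset (ℕ ⊕ Empty)) (A : Fm Empty) (y : ℕ) : Sum.inl y ∉ X →
      FOLPAxiom ((Fm.just t X A).imp (Fm.just t (insert (Sum.inl y) X) A))
  | sum1 (s t : Tm) (X : Finset (ℕ ⊕ Empty)) (A : Fm Empty) : FOLPAxiom ((Fm.just s X A).imp (Fm.just (Tm.plus s t) X A))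
  | sum2 (s t : Tm) (X : Finset (ℕ ⊕ Empty)) (A : Fm Empty) : FOLPAxiom ((Fm.just s X A).imp (Fm.just (Tm.plus t s) X A))
  | jK (s t : Tm) (X : Finset (ℕ ⊕ Empty)) (A B : Fm Empty) : FOLPAxiom ((Fm.just s X (A.imp B)).imp
      ((Fm.just t X A).imp (Fm.just (Tm.app s t) X B)))
  | jT (t : Tm) (X : Finset (ℕ ⊕ Empty)) (A : Fm Empty) : FOLPAxiom ((Fm.just t X A).imp A)
  | j4 (t : Tm) (X : Finset (ℕ ⊕ Empty)) (A : Fm Empty) : FOLPAxiom ((Fm.just t X A).imp (Fm.just (Tm.bang t) X (Fm.just t X A)))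
  | gen (t : Tm) (X : Finset (ℕ ⊕ Empty)) (A : Fm Empty) (x : ℕ) : Sum.inl x ∉ X →
      FOLPAxiom ((Fm.just t X A).imp (Fm.just (Tm.gen x t) X (Fm.all x A)))

/-- A constant specification is a set of pairs `(c, A)`, read `c : A`
(that is, `c :_∅ A`), where `A` is an axiom instance. -/
def ConstantSpec (CS : Set (ℕ × Fm Empty)) : Prop := ∀ p ∈ CS, FOLPAxiom p.2

/-- `CS` is axiomatically appropriate: every axiom instance has a constant justifying it. -/
def AxiomaticallyAppropriate (CS : Set (ℕ × Fm Empty)) : Prop :=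
  ∀ A, FOLPAxiom A → ∃ c, (c, A) ∈ CS

/-- `CS` is variant closed. -/
def VariantClosed (CS : Set (ℕ × Fm Empty)) : Prop :=
  ∀ c A B, VariableVariant A B → ((c, A) ∈ CS ↔ (c, B) ∈ CS)

/-- Derivability in the axiomatic system `FOLP_CS`:  axioms, axiom necessitation
restricted to `CS`, modus ponens, and universal generalization. -/
inductive Deriv (CS : Set (ℕ × Fm Empty)) : Fm Empty → Prop
  | ax {A : Fm Empty} : FOLPAxiom A → Deriv CS A
  | an {c : ℕ} {A : Fm Empty} : (c, A) ∈ CS → Deriv CS (Fm.just (Tm.jconst c) ∅ A)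
  | mp {A B : Fm Empty} : Deriv CS (A.imp B) → Deriv CS A → Deriv CS B
  | ug {A : Fm Empty} (x : ℕ) : Deriv CS A → Deriv CS (Fm.all x A)

/-- A Mkrtychev model of `FOLP_CS` with domain `D`:  an interpretation `I` of the
predicate symbols and an admissible evidence function `E` satisfying E1–E6. -/
structure MModel (CS : Set (ℕ × Fm Empty)) (D : Type) : Type where
  dom_nonempty : Nonempty D
  I : ℕ → Set (List D)
  E : Tm → Set (Fm D)
  e1 : ∀ c A, (c, A) ∈ CS → toK A ∈ E (Tm.jconst c)
  e2 : ∀ s t (A B : Fm D), Fm.imp A B ∈ E s → A ∈ E t → B ∈ E (Tm.app s t)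
  e3 : ∀ s t, E s ∪ E t ⊆ E (Tm.plus s t)
  e4 : ∀ t (A : Fm D) (X : Finset D), A ∈ E t → A.kocc ⊆ X →
      Fm.just t (X.image Sum.inr) A ∈ E (Tm.bang t)
  e5 : ∀ t (x : ℕ) (A : Fm D), A ∈ E t → Fm.all x A ∈ E (Tm.gen x t)
  e6 : ∀ t (A : Fm D) (x : ℕ) (a : D), A ∈ E t → A.subst1 x a ∈ E t

/-- Truth of a (closed) `D`-formula in a Mkrtychev model. -/
noncomputable def MModel.Sat {CS : Set (ℕ × Fm Empty)} {D : Type} (M : MModel CS D) :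
    Fm D → Prop
  | .pred Q args => ∃ as : List D, args = as.map Sum.inr ∧ as ∈ M.I Q
  | .neg A => ¬ M.Sat A
  | .imp A B => M.Sat A → M.Sat B
  | .all x A => ∀ a : D, M.Sat (A.subst1 x a)
  | .ex x A => ∃ a : D, M.Sat (A.subst1 x a)
  | .just t _ A => A ∈ M.E t ∧ M.Sat A.univClosure
  termination_by F => F.size
  decreasing_by
    all_goals simp only [Fm.size, Fm.size_univClosure]
    all_goals first
      | omega
      | exact Nat.lt_succ_of_le (Fm.size_subst1_le _ _ _)

/-- Truth of an FOLP sentence in a Mkrtychev model. -/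
noncomputable def MModel.SatSentence {CS : Set (ℕ × Fm Empty)} {D : Type}
    (M : MModel CS D) (F : Fm Empty) : Prop := M.Sat (toK F)

/-- A sentence is `FOLP_CS`-valid if it is true in every Mkrtychev model of `FOLP_CS`. -/
def FOLPValid (CS : Set (ℕ × Fm Empty)) (F : Fm Empty) : Prop :=
  ∀ (D : Type) (M : MModel CS D), M.SatSentence F

/-- Satisfiability of a closed Par-formula `A(u₁,…,uₙ)` in a model:
`M ⊩ A(a₁,…,aₙ)` for some `a₁,…,aₙ ∈ D`. -/
noncomputable def MModel.SatPar {CS : Set (ℕ × Fm Empty)} {D : Type}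
    (M : MModel CS D) (F : Fm ℕ) : Prop :=
  ∃ g : ℕ → D, M.Sat (F.kmap g)

/-- `X ⊆ Par`: the set `X` consists of parameters only. -/
def XPar (X : Finset (ℕ ⊕ ℕ)) : Prop := ∀ s ∈ X, ∃ u : ℕ, s = Sum.inr u

/-- One application of an FOLP tableau rule to a branch (represented by the set `S`
of closed Par-formulas occurring on it), producing the list of extended branches
(one branch for a non-branching rule, two for a branching rule). -/
inductive TabRule : Set (Fm ℕ) → List (Set (Fm ℕ)) → Prop
  | fneg {S A} : Fm.neg (Fm.neg A) ∈ S → TabRule S [insert A S]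
  | timp {S A B} : Fm.imp A B ∈ S → TabRule S [insert (Fm.neg A) S, insert B S]
  | fimp {S A B} : Fm.neg (Fm.imp A B) ∈ S → TabRule S [insert A (insert (Fm.neg B) S)]
  | tall {S x A} (u : ℕ) : Fm.all x A ∈ S → TabRule S [insert (A.subst1 x u) S]
  | fex {S x A} (u : ℕ) : Fm.neg (Fm.ex x A) ∈ S →
      TabRule S [insert (Fm.neg (A.subst1 x u)) S]
  | tex {S x A} (u : ℕ) : Fm.ex x A ∈ S → (∀ F ∈ S, u ∉ F.kocc) →
      TabRule S [insert (A.subst1 x u) S]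
  | fall {S x A} (u : ℕ) : Fm.neg (Fm.all x A) ∈ S → (∀ F ∈ S, u ∉ F.kocc) →
      TabRule S [insert (Fm.neg (A.subst1 x u)) S]
  | tcolon {S t X A} : Fm.just t X A ∈ S → XPar X → TabRule S [insert A.univClosure S]
  | fplus {S t s X A} : Fm.neg (Fm.just (Tm.plus t s) X A) ∈ S → XPar X →
      TabRule S [insert (Fm.neg (Fm.just t X A)) (insert (Fm.neg (Fm.just s X A)) S)]
  | fapp {S s t X B} (A : Fm ℕ) : Fm.neg (Fm.just (Tm.app s t) X B) ∈ S → XPar X →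
      (∀ u ∈ A.kocc, Sum.inr u ∈ X) →
      TabRule S [insert (Fm.neg (Fm.just s X (A.imp B))) S,
                 insert (Fm.neg (Fm.just t X A)) S]
  | fbang {S t X A} : Fm.neg (Fm.just (Tm.bang t) X (Fm.just t X A)) ∈ S → XPar X →
      TabRule S [insert (Fm.neg (Fm.just t X A)) S]
  | ctr {S t X A} (u : ℕ) : Fm.neg (Fm.just t X A) ∈ S → XPar X → Sum.inr u ∉ X →
      TabRule S [insert (Fm.neg (Fm.just t (insert (Sum.inr u) X) A)) S]
  | exp {S t X A} (u : ℕ) : Fm.neg (Fm.just t (insert (Sum.inr u) X) A) ∈ S →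
      XPar X → Sum.inr u ∉ X → u ∉ A.kocc →
      TabRule S [insert (Fm.neg (Fm.just t X A)) S]
  | ins {S t X A} (x u : ℕ) : Fm.neg (Fm.just t X (A.subst1 x u)) ∈ S → XPar X →
      TabRule S [insert (Fm.neg (Fm.just t X A)) S]
  | genx {S t X A x} : Fm.neg (Fm.just (Tm.gen x t) X (Fm.all x A)) ∈ S → XPar X →
      TabRule S [insert (Fm.neg (Fm.just t X A)) S]

/-- `ClosedTableau CS S`: there is a closed `FOLP_CS`-tableau beginning with the
formulas of `S`.  A branch closes if it contains both `A` and `¬A`, or contains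
`¬c:A` with `c:A ∈ CS`. -/
inductive ClosedTableau (CS : Set (ℕ × Fm Empty)) : Set (Fm ℕ) → Prop
  | close {S A} : A ∈ S → Fm.neg A ∈ S → ClosedTableau CS S
  | closeCS {S c A} : (c, A) ∈ CS →
      Fm.neg (Fm.just (Tm.jconst c) ∅ (toK A)) ∈ S → ClosedTableau CS S
  | step {S l} : TabRule S l → (∀ S' ∈ l, ClosedTableau CS S') → ClosedTableau CS S

/-- An `FOLP_CS`-tableau proof of the sentence `F`: a closed tableau beginning
with `¬F`. -/
def TabProof (CS : Set (ℕ × Fm Empty)) (F : Fm Empty) : Prop :=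
  ClosedTableau CS {Fm.neg (toK F)}

/-- A set of closed Par-formulas is tableau `FOLP_CS`-consistent if no finite
subset of it has a closed `FOLP_CS`-tableau. -/
def TabConsistent (CS : Set (ℕ × Fm Empty)) (Γ : Set (Fm ℕ)) : Prop :=
  ∀ S : Set (Fm ℕ), S ⊆ Γ → S.Finite → ¬ ClosedTableau CS S

/-- `Γ` is maximal: it has no proper tableau consistent extension by closed Par-formulas. -/
def MaximalCons (CS : Set (ℕ × Fm Empty)) (Γ : Set (Fm ℕ)) : Prop :=
  TabConsistent CS Γ ∧
    ∀ Δ : Set (Fm ℕ), Γ ⊆ Δ → (∀ F ∈ Δ, F.Closed) → TabConsistent CS Δ → Δ = Γ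

/-- `Γ` is E-complete (with parameters as witnesses). -/
def EComplete (Γ : Set (Fm ℕ)) : Prop :=
  (∀ (x : ℕ) (A : Fm ℕ), Fm.ex x A ∈ Γ → ∃ u : ℕ, A.subst1 x u ∈ Γ) ∧
  (∀ (x : ℕ) (A : Fm ℕ), Fm.neg (Fm.all x A) ∈ Γ → ∃ u : ℕ, Fm.neg (A.subst1 x u) ∈ Γ)

/-- The interpretation of the canonical model determined by `Γ`:
`I(Q) = { (u₁,…,uₙ) | Q(u₁,…,uₙ) ∈ Γ }`. -/
def canI (Γ : Set (Fm ℕ)) (Q : ℕ) : Set (List ℕ) :=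
  {us | Fm.pred Q (us.map Sum.inr) ∈ Γ}

/-- The evidence function of the canonical model determined by `Γ`:
`E(t) = { A | ¬ t:_{Par(A)} A ∉ Γ }`. -/
def canE (Γ : Set (Fm ℕ)) (t : Tm) : Set (Fm ℕ) :=
  {A | Fm.neg (Fm.just t (A.kocc.image Sum.inr) A) ∉ Γ}



namespace Fm

variable {K K' : Type}

theorem mem_right_toFinset (X : Finset (ℕ ⊕ K)) (a : K) :
    a ∈ (X.toList.filterMap Sum.getRight?).toFinset ↔ Sum.inr a ∈ X := by
  simp only [List.mem_toFinset, List.mem_filterMap, Finset.mem_toList]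
  constructor
  · rintro ⟨s, hs, hget⟩
    cases s with
    | inl x => simp [Sum.getRight?] at hget
    | inr b => simp only [Sum.getRight?, Option.some.injEq] at hget; subst hget; exact hs
  · intro h; exact ⟨Sum.inr a, h, rfl⟩

theorem mem_left_toFinset (X : Finset (ℕ ⊕ K)) (x : ℕ) :
    x ∈ (X.toList.filterMap Sum.getLeft?).toFinset ↔ Sum.inl x ∈ X := by
  simp only [List.mem_toFinset, List.mem_filterMap, Finset.mem_toList]
  constructor
  · rintro ⟨s, hs, hget⟩
    cases s with
    | inl y => simp only [Sum.getLeft?, Option.some.injEq] at hget; subst hget; exact hs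
    | inr b => simp [Sum.getLeft?] at hget
  · intro h; exact ⟨Sum.inl x, h, rfl⟩

theorem inl_mem_image_sumMap (f : K → K') (X : Finset (ℕ ⊕ K)) (y : ℕ) :
    Sum.inl y ∈ X.image (Sum.map id f) ↔ Sum.inl y ∈ X := by
  simp only [Finset.mem_image]
  constructor
  · rintro ⟨s, hs, hget⟩
    cases s with
    | inl x =>
        simp only [Sum.map_inl, id_eq, Sum.inl.injEq] at hget
        subst hget; exact hs
    | inr a => simp [Sum.map_inr] at hget
  · intro h; exact ⟨Sum.inl y, h, rfl⟩

theorem inr_mem_image_sumMap (f : K → K') (X : Finset (ℕ ⊕ K)) (b : K') :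
    Sum.inr b ∈ X.image (Sum.map id f) ↔ ∃ a, Sum.inr a ∈ X ∧ f a = b := by
  simp only [Finset.mem_image]
  constructor
  · rintro ⟨s, hs, hget⟩
    cases s with
    | inl x => simp [Sum.map_inl] at hget
    | inr a =>
        simp only [Sum.map_inr, Sum.inr.injEq] at hget
        exact ⟨a, hs, hget⟩
  · rintro ⟨a, ha, rfl⟩; exact ⟨Sum.inr a, ha, rfl⟩

theorem filterMap_getRight_comp (f : K → K') (l : List (ℕ ⊕ K)) :
    l.filterMap (Sum.getRight? ∘ Sum.map id f) = (l.filterMap Sum.getRight?).map f := by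
  induction l with
  | nil => simp
  | cons a l ih => cases a <;> simp only [List.filterMap_cons, Function.comp_apply, Sum.map_inl, Sum.map_inr, Sum.getRight?_inl, Sum.getRight?_inr, List.map_cons, ← ih]

theorem filterMap_getLeft_comp (f : K → K') (l : List (ℕ ⊕ K)) :
    l.filterMap (Sum.getLeft? ∘ Sum.map id f) = l.filterMap Sum.getLeft? := by
  induction l with
  | nil => simp
  | cons a l ih => cases a <;> simp [ih]

theorem toFinset_getRight_image (f : K → K') (X : Finset (ℕ ⊕ K)) :
    (((X.image (Sum.map id f)).toList.filterMap Sum.getRight?)).toFinset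
      = ((X.toList.filterMap Sum.getRight?).toFinset).image f := by
  ext b
  rw [mem_right_toFinset, inr_mem_image_sumMap]
  simp only [Finset.mem_image]
  constructor
  · rintro ⟨a, ha, rfl⟩; exact ⟨a, (mem_right_toFinset X a).2 ha, rfl⟩
  · rintro ⟨a, ha, rfl⟩; exact ⟨a, (mem_right_toFinset X a).1 ha, rfl⟩

theorem toFinset_getLeft_image (f : K → K') (X : Finset (ℕ ⊕ K)) :
    (((X.image (Sum.map id f)).toList.filterMap Sum.getLeft?)).toFinset
      = (X.toList.filterMap Sum.getLeft?).toFinset := by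
  ext x
  rw [mem_left_toFinset, mem_left_toFinset, inl_mem_image_sumMap]

theorem kocc_kmap (f : K → K') (A : Fm K) : (A.kmap f).kocc = A.kocc.image f := by
  induction A with
  | pred Q args =>
      simp only [kmap, kocc, List.filterMap_map, filterMap_getRight_comp]
      ext a; simp
  | neg A ih => simpa [kmap, kocc] using ih
  | imp A B ihA ihB => simp [kmap, kocc, ihA, ihB, Finset.image_union]
  | all x A ih => simpa [kmap, kocc] using ih
  | ex x A ih => simpa [kmap, kocc] using ih
  | just t X A ih => simp [kmap, kocc, ih, toFinset_getRight_image, Finset.image_union]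

theorem fvar_kmap (f : K → K') (A : Fm K) : (A.kmap f).fvar = A.fvar := by
  induction A with
  | pred Q args => simp [kmap, fvar, List.filterMap_map, filterMap_getLeft_comp]
  | neg A ih => simpa [kmap, fvar] using ih
  | imp A B ihA ihB => simp [kmap, fvar, ihA, ihB]
  | all x A ih => simp [kmap, fvar, ih]
  | ex x A ih => simp [kmap, fvar, ih]
  | just t X A ih => simp [kmap, fvar, toFinset_getLeft_image]

theorem kmap_congr {f g : K → K'} (A : Fm K) (h : ∀ a ∈ A.kocc, f a = g a) :
    A.kmap f = A.kmap g := by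
  induction A with
  | pred Q args =>
      simp only [kmap, pred.injEq, true_and]
      apply List.map_congr_left
      intro s hs
      cases s with
      | inl x => rfl
      | inr a =>
          have : a ∈ (pred Q args : Fm K).kocc := by
            simp only [kocc, List.mem_toFinset, List.mem_filterMap]
            exact ⟨Sum.inr a, hs, rfl⟩
          simp [Sum.map, h a this]
  | neg A ih => simp only [kmap, neg.injEq]; exact ih h
  | imp A B ihA ihB =>
      simp only [kmap, imp.injEq]
      exact ⟨ihA fun a ha => h a (by simp [kocc, ha]),
             ihB fun a ha => h a (by simp [kocc, ha])⟩
  | all x A ih => simp only [kmap, all.injEq, true_and]; exact ih h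
  | ex x A ih => simp only [kmap, ex.injEq, true_and]; exact ih h
  | just t X A ih =>
      simp only [kmap, just.injEq, true_and]
      constructor
      · apply Finset.image_congr
        intro s hs
        cases s with
        | inl x => rfl
        | inr a =>
            have : a ∈ (just t X A).kocc := by
              simp only [kocc, Finset.mem_union]
              exact Or.inr ((mem_right_toFinset X a).2 hs)
            simp [Sum.map, h a this]
      · exact ih fun a ha => h a (by simp [kocc, ha])

theorem kmap_id (A : Fm K) : A.kmap id = A := by
  induction A with
  | pred Q args => simp [kmap]
  | neg A ih => simp [kmap, ih]
  | imp A B ihA ihB => simp [kmap, ihA, ihB]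
  | all x A ih => simp [kmap, ih]
  | ex x A ih => simp [kmap, ih]
  | just t X A ih => simp [kmap, ih]

theorem subK_map (f : K → K') (σ : ℕ → Option K) (s : ℕ ⊕ K) :
    Sum.map id f (subK σ s) = subK (fun y => (σ y).map f) (Sum.map id f s) := by
  cases s with
  | inl x => cases h : σ x <;> simp [subK, h, Sum.map]
  | inr a => simp [subK, Sum.map]

theorem kmap_msubst (f : K → K') (σ : ℕ → Option K) (A : Fm K) :
    (A.msubst σ).kmap f = (A.kmap f).msubst (fun y => (σ y).map f) := by
  induction A generalizing σ with
  | pred Q args =>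
      simp only [msubst, kmap, List.map_map, pred.injEq, true_and]
      apply List.map_congr_left
      intro s _
      exact subK_map f σ s
  | neg A ih => simp [msubst, kmap, ih]
  | imp A B ihA ihB => simp [msubst, kmap, ihA, ihB]
  | all x A ih =>
      simp only [msubst, kmap, all.injEq, true_and, ih]
      congr 1
      funext y
      by_cases h : y = x <;> simp [h]
  | ex x A ih =>
      simp only [msubst, kmap, ex.injEq, true_and, ih]
      congr 1
      funext y
      by_cases h : y = x <;> simp [h]
  | just t X A ih =>
      simp only [msubst, kmap, just.injEq, true_and, ih]
      constructor
      · rw [Finset.image_image, Finset.image_image]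
        apply Finset.image_congr
        intro s _
        exact subK_map f σ s
      · congr 1
        funext y
        by_cases h : Sum.inl y ∈ X
        · rw [if_pos h, if_pos ((inl_mem_image_sumMap f X y).2 h)]
        · rw [if_neg h, if_neg (fun hc => h ((inl_mem_image_sumMap f X y).1 hc))]
          simp

theorem kmap_subst1 (f : K → K') (x : ℕ) (u : K) (A : Fm K) :
    (A.subst1 x u).kmap f = (A.kmap f).subst1 x (f u) := by
  unfold subst1
  rw [kmap_msubst]
  congr 1
  funext y
  by_cases h : y = x <;> simp [h]

theorem kmap_foldr_all (f : K → K') (l : List ℕ) (A : Fm K) :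
    (l.foldr Fm.all A).kmap f = l.foldr Fm.all (A.kmap f) := by
  induction l with
  | nil => rfl
  | cons z l ih => simp [kmap, ih]

theorem kmap_univClosure (f : K → K') (A : Fm K) :
    A.univClosure.kmap f = (A.kmap f).univClosure := by
  unfold univClosure
  rw [kmap_foldr_all, fvar_kmap]

end Fm

theorem Fm.mem_kocc_kmap {K K' : Type} (f : K → K') (A : Fm K) (b : K') :
    b ∈ (A.kmap f).kocc ↔ ∃ a ∈ A.kocc, f a = b := by
  rw [Fm.kocc_kmap]
  simp [Finset.mem_image]


theorem Fm.kmap_kmap {K K' K'' : Type} (f : K → K') (g : K' → K'') (A : Fm K) :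
    (A.kmap f).kmap g = A.kmap (g ∘ f) := by
  induction A with
  | pred Q args =>
      simp only [kmap, List.map_map, pred.injEq, true_and]
      apply List.map_congr_left
      intro s _
      cases s <;> simp [Sum.map]
  | neg A ih => simp [kmap, ih]
  | imp A B ihA ihB => simp [kmap, ihA, ihB]
  | all x A ih => simp [kmap, ih]
  | ex x A ih => simp [kmap, ih]
  | just t X A ih =>
      simp only [kmap, just.injEq, true_and, ih, Finset.image_image, and_true]
      apply Finset.image_congr
      intro s _
      cases s <;> simp [Sum.map]

theorem kmap_toK {K K' : Type} (f : K → K') (A : Fm Empty) :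
    (toK A : Fm K).kmap f = toK A := by
  unfold toK
  rw [Fm.kmap_kmap]
  congr 1
  funext a
  exact a.elim

theorem kmap_neg (f : ℕ → ℕ) (A : Fm ℕ) :
    Fm.kmap f (Fm.neg A) = Fm.neg (Fm.kmap f A) := by simp [Fm.kmap]

theorem kmap_imp (f : ℕ → ℕ) (A B : Fm ℕ) :
    Fm.kmap f (Fm.imp A B) = Fm.imp (Fm.kmap f A) (Fm.kmap f B) := by simp [Fm.kmap]

theorem kmap_all (f : ℕ → ℕ) (x : ℕ) (A : Fm ℕ) :
    Fm.kmap f (Fm.all x A) = Fm.all x (Fm.kmap f A) := by simp [Fm.kmap]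

theorem kmap_ex (f : ℕ → ℕ) (x : ℕ) (A : Fm ℕ) :
    Fm.kmap f (Fm.ex x A) = Fm.ex x (Fm.kmap f A) := by simp [Fm.kmap]

theorem kmap_just (f : ℕ → ℕ) (t : Tm) (X : Finset (ℕ ⊕ ℕ)) (A : Fm ℕ) :
    Fm.kmap f (Fm.just t X A) = Fm.just t (X.image (Sum.map id f)) (Fm.kmap f A) := by
  simp only [Fm.kmap]
  congr
  funext a b
  exact Subsingleton.elim _ _

theorem image_insert_inr (f : ℕ → ℕ) (X : Finset (ℕ ⊕ ℕ)) (u : ℕ) :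
    (insert (Sum.inr u) X).image (Sum.map id f)
      = insert (Sum.inr (f u) : ℕ ⊕ ℕ) (X.image (Sum.map id f)) := by
  simp [Finset.image_insert]

theorem xpar_image (f : ℕ → ℕ) {X : Finset (ℕ ⊕ ℕ)} (h : XPar X) :
    XPar (X.image (Sum.map id f)) := by
  intro s hs
  obtain ⟨s', hs', rfl⟩ := Finset.mem_image.1 hs
  obtain ⟨u, rfl⟩ := h s' hs'
  exact ⟨f u, rfl⟩

theorem kmap_image_insert_subset (f : ℕ → ℕ) {S S' : Set (Fm ℕ)}
    (hsub : Fm.kmap f '' S ⊆ S') (C : Fm ℕ) :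
    Fm.kmap f '' (insert C S) ⊆ insert (Fm.kmap f C) S' := by
  rw [Set.image_insert_eq]; exact Set.insert_subset_insert hsub

theorem inr_not_mem_image {f : ℕ → ℕ} (hf : Function.Injective f)
    {X : Finset (ℕ ⊕ ℕ)} {u : ℕ} (h : Sum.inr u ∉ X) :
    Sum.inr (f u) ∉ X.image (Sum.map id f) := by
  intro hc
  obtain ⟨s, hs, hget⟩ := Finset.mem_image.1 hc
  cases s with
  | inl x => simp [Sum.map] at hget
  | inr a =>
      simp only [Sum.map_inr, Sum.inr.injEq] at hget
      exact h ((hf hget) ▸ hs)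

theorem closedTableau_mono_perm {CS : Set (ℕ × Fm Empty)} {S : Set (Fm ℕ)}
    (h : ClosedTableau CS S) :
    ∀ (f : Equiv.Perm ℕ) (S' : Set (Fm ℕ)), (Fm.kmap f) '' S ⊆ S' → S'.Finite →
      ClosedTableau CS S' := by
  induction h with
  | close hA hnA =>
      intro f S' hsub hfin
      exact ClosedTableau.close (hsub (Set.mem_image_of_mem _ hA))
        (by simpa [kmap_neg] using hsub (Set.mem_image_of_mem _ hnA))
  | closeCS hc hneg =>
      intro f S' hsub hfin
      refine ClosedTableau.closeCS hc ?_
      simpa [kmap_neg, kmap_just, kmap_toK] using hsub (Set.mem_image_of_mem _ hneg)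
  | step hrule hall ih =>
      intro f S' hsub hfin
      cases hrule with
      | @fneg A hmem =>
          have h1 : Fm.neg (Fm.neg (Fm.kmap f A)) ∈ S' := by
            simpa [kmap_neg] using hsub (Set.mem_image_of_mem _ hmem)
          refine ClosedTableau.step (TabRule.fneg h1) ?_
          rintro T hT; simp only [List.mem_singleton] at hT; subst hT
          refine ih _ (List.mem_singleton_self _) f _ ?_ (hfin.insert _)
          exact kmap_image_insert_subset f hsub A
      | @timp A B hmem =>
          have h1 : Fm.imp (Fm.kmap f A) (Fm.kmap f B) ∈ S' := by
            simpa [kmap_imp] using hsub (Set.mem_image_of_mem _ hmem)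
          refine ClosedTableau.step (TabRule.timp h1) ?_
          rintro T hT
          simp only [List.mem_cons, List.mem_singleton, List.not_mem_nil, or_false] at hT
          rcases hT with rfl | rfl
          · refine ih _ (List.mem_cons_self) f _ ?_ (hfin.insert _)
            simpa [kmap_neg] using kmap_image_insert_subset f hsub (Fm.neg A)
          · refine ih _ (List.mem_cons_of_mem _ (List.mem_singleton_self _)) f _ ?_ (hfin.insert _)
            exact kmap_image_insert_subset f hsub B
      | @fimp A B hmem =>
          have h1 : Fm.neg (Fm.imp (Fm.kmap f A) (Fm.kmap f B)) ∈ S' := by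
            simpa [kmap_neg, kmap_imp] using hsub (Set.mem_image_of_mem _ hmem)
          refine ClosedTableau.step (TabRule.fimp h1) ?_
          rintro T hT; simp only [List.mem_singleton] at hT; subst hT
          refine ih _ (List.mem_singleton_self _) f _ ?_ ((hfin.insert _).insert _)
          have h2 := kmap_image_insert_subset f (kmap_image_insert_subset f hsub (Fm.neg B)) A
          simpa [kmap_neg] using h2
      | @tall x A u hmem =>
          have h1 : Fm.all x (Fm.kmap f A) ∈ S' := by
            simpa [kmap_all] using hsub (Set.mem_image_of_mem _ hmem)
          refine ClosedTableau.step (TabRule.tall (f u) h1) ?_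
          rintro T hT; simp only [List.mem_singleton] at hT; subst hT
          refine ih _ (List.mem_singleton_self _) f _ ?_ (hfin.insert _)
          have h2 := kmap_image_insert_subset f hsub (A.subst1 x u)
          rwa [Fm.kmap_subst1] at h2
      | @fex x A u hmem =>
          have h1 : Fm.neg (Fm.ex x (Fm.kmap f A)) ∈ S' := by
            simpa [kmap_neg, kmap_ex] using hsub (Set.mem_image_of_mem _ hmem)
          refine ClosedTableau.step (TabRule.fex (f u) h1) ?_
          rintro T hT; simp only [List.mem_singleton] at hT; subst hT
          refine ih _ (List.mem_singleton_self _) f _ ?_ (hfin.insert _)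
          have h2 := kmap_image_insert_subset f hsub (Fm.neg (A.subst1 x u))
          simp only [kmap_neg, Fm.kmap_subst1] at h2
          exact h2
      | @tex x A u hmem hfresh =>
          have h1 : Fm.ex x (Fm.kmap f A) ∈ S' := by
            simpa [kmap_ex] using hsub (Set.mem_image_of_mem _ hmem)
          obtain ⟨w, hw⟩ := Infinite.exists_notMem_finset
            (hfin.toFinset.biUnion (fun F => F.kocc))
          have hfreshS' : ∀ F ∈ S', w ∉ F.kocc := fun F hF hk =>
            hw (Finset.mem_biUnion.2 ⟨F, hfin.mem_toFinset.2 hF, hk⟩)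
          refine ClosedTableau.step (TabRule.tex w h1 hfreshS') ?_
          rintro T hT; simp only [List.mem_singleton] at hT; subst hT
          set g : Equiv.Perm ℕ := (Equiv.swap u (f.symm w)).trans f with hg
          have hgf : ∀ F : Fm ℕ, Fm.kmap f F ∈ S' → u ∉ F.kocc → Fm.kmap g F = Fm.kmap f F := by
            intro F hFS' hFu
            apply Fm.kmap_congr
            intro a ha
            have h2 : a ≠ u := fun h => hFu (h ▸ ha)
            have h3 : a ≠ f.symm w := by
              intro h
              apply hfreshS' _ hFS'
              refine (Fm.mem_kocc_kmap (⇑f) F w).2 ⟨a, ha, ?_⟩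
              rw [h]; exact f.apply_symm_apply w
            simp [hg, Equiv.trans_apply, Equiv.swap_apply_of_ne_of_ne h2 h3]
          have hgA : Fm.kmap g A = Fm.kmap f A := by
            have h4 := hgf (Fm.ex x A) (hsub (Set.mem_image_of_mem _ hmem)) (hfresh _ hmem)
            simpa [kmap_ex] using h4
          have hgu : g u = w := by
            simp [hg, Equiv.trans_apply, Equiv.swap_apply_left]
          refine ih _ (List.mem_singleton_self _) g _ ?_ (hfin.insert _)
          rw [Set.image_insert_eq, Fm.kmap_subst1, hgA, hgu]
          refine Set.insert_subset_insert ?_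
          rintro y ⟨F, hF, rfl⟩
          rw [hgf F (hsub (Set.mem_image_of_mem _ hF)) (hfresh F hF)]
          exact hsub (Set.mem_image_of_mem _ hF)
      | @fall x A u hmem hfresh =>
          have h1 : Fm.neg (Fm.all x (Fm.kmap f A)) ∈ S' := by
            simpa [kmap_neg, kmap_all] using hsub (Set.mem_image_of_mem _ hmem)
          obtain ⟨w, hw⟩ := Infinite.exists_notMem_finset
            (hfin.toFinset.biUnion (fun F => F.kocc))
          have hfreshS' : ∀ F ∈ S', w ∉ F.kocc := fun F hF hk =>
            hw (Finset.mem_biUnion.2 ⟨F, hfin.mem_toFinset.2 hF, hk⟩)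
          refine ClosedTableau.step (TabRule.fall w h1 hfreshS') ?_
          rintro T hT; simp only [List.mem_singleton] at hT; subst hT
          set g : Equiv.Perm ℕ := (Equiv.swap u (f.symm w)).trans f with hg
          have hgf : ∀ F : Fm ℕ, Fm.kmap f F ∈ S' → u ∉ F.kocc → Fm.kmap g F = Fm.kmap f F := by
            intro F hFS' hFu
            apply Fm.kmap_congr
            intro a ha
            have h2 : a ≠ u := fun h => hFu (h ▸ ha)
            have h3 : a ≠ f.symm w := by
              intro h
              apply hfreshS' _ hFS'
              refine (Fm.mem_kocc_kmap (⇑f) F w).2 ⟨a, ha, ?_⟩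
              rw [h]; exact f.apply_symm_apply w
            simp [hg, Equiv.trans_apply, Equiv.swap_apply_of_ne_of_ne h2 h3]
          have hgA : Fm.kmap g A = Fm.kmap f A := by
            have h4 := hgf (Fm.neg (Fm.all x A)) (hsub (Set.mem_image_of_mem _ hmem)) (hfresh _ hmem)
            simpa [kmap_neg, kmap_all] using h4
          have hgu : g u = w := by
            simp [hg, Equiv.trans_apply, Equiv.swap_apply_left]
          refine ih _ (List.mem_singleton_self _) g _ ?_ (hfin.insert _)
          rw [Set.image_insert_eq]
          have heq : Fm.kmap g (Fm.neg (A.subst1 x u)) = Fm.neg ((Fm.kmap f A).subst1 x w) := by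
            rw [kmap_neg, Fm.kmap_subst1, hgA, hgu]
          rw [heq]
          refine Set.insert_subset_insert ?_
          rintro y ⟨F, hF, rfl⟩
          rw [hgf F (hsub (Set.mem_image_of_mem _ hF)) (hfresh F hF)]
          exact hsub (Set.mem_image_of_mem _ hF)
      | @tcolon t X A hmem hXP =>
          have h1 : Fm.just t (X.image (Sum.map id f)) (Fm.kmap f A) ∈ S' := by
            simpa [kmap_just] using hsub (Set.mem_image_of_mem _ hmem)
          refine ClosedTableau.step (TabRule.tcolon h1 (xpar_image f hXP)) ?_
          rintro T hT; simp only [List.mem_singleton] at hT; subst hT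
          refine ih _ (List.mem_singleton_self _) f _ ?_ (hfin.insert _)
          have h2 := kmap_image_insert_subset f hsub A.univClosure
          rwa [Fm.kmap_univClosure] at h2
      | @fplus t s X A hmem hXP =>
          have h1 : Fm.neg (Fm.just (Tm.plus t s) (X.image (Sum.map id f)) (Fm.kmap f A)) ∈ S' := by
            simpa [kmap_neg, kmap_just] using hsub (Set.mem_image_of_mem _ hmem)
          refine ClosedTableau.step (TabRule.fplus h1 (xpar_image f hXP)) ?_
          rintro T hT; simp only [List.mem_singleton] at hT; subst hT
          refine ih _ (List.mem_singleton_self _) f _ ?_ ((hfin.insert _).insert _)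
          have h2 := kmap_image_insert_subset f
            (kmap_image_insert_subset f hsub (Fm.neg (Fm.just s X A))) (Fm.neg (Fm.just t X A))
          simpa [kmap_neg, kmap_just] using h2
      | @fapp s t X B A hmem hXP hcond =>
          have h1 : Fm.neg (Fm.just (Tm.app s t) (X.image (Sum.map id f)) (Fm.kmap f B)) ∈ S' := by
            simpa [kmap_neg, kmap_just] using hsub (Set.mem_image_of_mem _ hmem)
          have hcond' : ∀ u ∈ (Fm.kmap f A).kocc, Sum.inr u ∈ X.image (Sum.map id f) := by
            intro u hu
            obtain ⟨a, ha, rfl⟩ := (Fm.mem_kocc_kmap (⇑f) A u).1 hu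
            exact Finset.mem_image.2 ⟨Sum.inr a, hcond a ha, rfl⟩
          refine ClosedTableau.step (TabRule.fapp (Fm.kmap f A) h1 (xpar_image f hXP) hcond') ?_
          rintro T hT
          simp only [List.mem_cons, List.mem_singleton, List.not_mem_nil, or_false] at hT
          rcases hT with rfl | rfl
          · refine ih _ (List.mem_cons_self) f _ ?_ (hfin.insert _)
            have h2 := kmap_image_insert_subset f hsub (Fm.neg (Fm.just s X (A.imp B)))
            simpa [kmap_neg, kmap_just, kmap_imp] using h2
          · refine ih _ (List.mem_cons_of_mem _ (List.mem_singleton_self _)) f _ ?_ (hfin.insert _)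
            have h2 := kmap_image_insert_subset f hsub (Fm.neg (Fm.just t X A))
            simpa [kmap_neg, kmap_just] using h2
      | @fbang t X A hmem hXP =>
          have h1 : Fm.neg (Fm.just (Tm.bang t) (X.image (Sum.map id f))
              (Fm.just t (X.image (Sum.map id f)) (Fm.kmap f A))) ∈ S' := by
            simpa [kmap_neg, kmap_just] using hsub (Set.mem_image_of_mem _ hmem)
          refine ClosedTableau.step (TabRule.fbang h1 (xpar_image f hXP)) ?_
          rintro T hT; simp only [List.mem_singleton] at hT; subst hT
          refine ih _ (List.mem_singleton_self _) f _ ?_ (hfin.insert _)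
          have h2 := kmap_image_insert_subset f hsub (Fm.neg (Fm.just t X A))
          simpa [kmap_neg, kmap_just] using h2
      | @ctr t X A u hmem hXP hnin =>
          have h1 : Fm.neg (Fm.just t (X.image (Sum.map id f)) (Fm.kmap f A)) ∈ S' := by
            simpa [kmap_neg, kmap_just] using hsub (Set.mem_image_of_mem _ hmem)
          refine ClosedTableau.step
            (TabRule.ctr (f u) h1 (xpar_image f hXP) (inr_not_mem_image f.injective hnin)) ?_
          rintro T hT; simp only [List.mem_singleton] at hT; subst hT
          refine ih _ (List.mem_singleton_self _) f _ ?_ (hfin.insert _)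
          have h2 := kmap_image_insert_subset f hsub
            (Fm.neg (Fm.just t (insert (Sum.inr u) X) A))
          simpa [kmap_neg, kmap_just, image_insert_inr] using h2
      | @exp t X A u hmem hXP hnin hna =>
          have h1 : Fm.neg (Fm.just t (insert (Sum.inr (f u)) (X.image (Sum.map id f)))
              (Fm.kmap f A)) ∈ S' := by
            have h2 := hsub (Set.mem_image_of_mem _ hmem)
            simpa [kmap_neg, kmap_just, image_insert_inr] using h2
          have hna' : f u ∉ (Fm.kmap f A).kocc := by
            intro hc
            obtain ⟨a, ha, hfa⟩ := (Fm.mem_kocc_kmap (⇑f) A (f u)).1 hc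
            exact hna ((f.injective hfa) ▸ ha)
          refine ClosedTableau.step
            (TabRule.exp (f u) h1 (xpar_image f hXP) (inr_not_mem_image f.injective hnin) hna') ?_
          rintro T hT; simp only [List.mem_singleton] at hT; subst hT
          refine ih _ (List.mem_singleton_self _) f _ ?_ (hfin.insert _)
          have h2 := kmap_image_insert_subset f hsub (Fm.neg (Fm.just t X A))
          simpa [kmap_neg, kmap_just] using h2
      | @ins t X A x u hmem hXP =>
          have h1 : Fm.neg (Fm.just t (X.image (Sum.map id f))
              ((Fm.kmap f A).subst1 x (f u))) ∈ S' := by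
            have h2 := hsub (Set.mem_image_of_mem _ hmem)
            simpa [kmap_neg, kmap_just, Fm.kmap_subst1] using h2
          refine ClosedTableau.step (TabRule.ins x (f u) h1 (xpar_image f hXP)) ?_
          rintro T hT; simp only [List.mem_singleton] at hT; subst hT
          refine ih _ (List.mem_singleton_self _) f _ ?_ (hfin.insert _)
          have h2 := kmap_image_insert_subset f hsub (Fm.neg (Fm.just t X A))
          simpa [kmap_neg, kmap_just] using h2
      | @genx t X A x hmem hXP =>
          have h1 : Fm.neg (Fm.just (Tm.gen x t) (X.image (Sum.map id f))
              (Fm.all x (Fm.kmap f A))) ∈ S' := by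
            simpa [kmap_neg, kmap_just, kmap_all] using hsub (Set.mem_image_of_mem _ hmem)
          refine ClosedTableau.step (TabRule.genx h1 (xpar_image f hXP)) ?_
          rintro T hT; simp only [List.mem_singleton] at hT; subst hT
          refine ih _ (List.mem_singleton_self _) f _ ?_ (hfin.insert _)
          have h2 := kmap_image_insert_subset f hsub (Fm.neg (Fm.just t X A))
          simpa [kmap_neg, kmap_just] using h2

theorem closedTableau_mono {CS : Set (ℕ × Fm Empty)} {S S' : Set (Fm ℕ)}
    (h : ClosedTableau CS S) (hsub : S ⊆ S') (hfin : S'.Finite) : ClosedTableau CS S' := by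
  refine closedTableau_mono_perm h (Equiv.refl ℕ) S' ?_ hfin
  rintro y ⟨F, hF, rfl⟩
  have hid : Fm.kmap (⇑(Equiv.refl ℕ)) F = F := by
    rw [Equiv.coe_refl, Fm.kmap_id]
  rw [hid]
  exact hsub hF


theorem closed_neg_just_image (t : Tm) (X : Finset ℕ) (A : Fm ℕ) :
    (Fm.neg (Fm.just t (X.image Sum.inr) A)).Closed := by
  simp only [Fm.Closed, Fm.fvar]
  ext x
  simp only [List.mem_toFinset, List.mem_filterMap, Finset.mem_toList, Finset.mem_image,
    Finset.notMem_empty, iff_false, not_exists, not_and]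
  rintro s ⟨b, hb, rfl⟩ hget
  simp [Sum.getLeft?] at hget

theorem kocc_just_image (t : Tm) (X : Finset ℕ) (A : Fm ℕ) (hX : A.kocc ⊆ X) :
    (Fm.just t (X.image Sum.inr) A).kocc = X := by
  simp only [Fm.kocc]
  ext a
  simp only [Finset.mem_union, List.mem_toFinset, List.mem_filterMap, Finset.mem_toList,
    Finset.mem_image]
  constructor
  · rintro (h | ⟨s, ⟨b, hb, rfl⟩, hget⟩)
    · exact hX h
    · simp only [Sum.getRight?, Option.some.injEq] at hget
      subst hget; exact hb
  · intro h
    exact Or.inr ⟨Sum.inr a, ⟨a, h, rfl⟩, rfl⟩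

theorem xpar_image_inr (X : Finset ℕ) : XPar (X.image Sum.inr) := by
  intro s hs
  obtain ⟨u, _, rfl⟩ := Finset.mem_image.1 hs
  exact ⟨u, rfl⟩

theorem exp_chain (CS : Set (ℕ × Fm Empty)) (t : Tm) (A : Fm ℕ) (T : Set (Fm ℕ))
    (hTfin : T.Finite)
    (hbase : ClosedTableau CS (insert (Fm.neg (Fm.just t (A.kocc.image Sum.inr) A)) T)) :
    ∀ D : Finset ℕ,
      ClosedTableau CS (insert (Fm.neg (Fm.just t ((A.kocc ∪ D).image Sum.inr) A)) T) := by
  intro D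
  induction D using Finset.induction_on with
  | empty => simpa using hbase
  | @insert u D hu ih =>
      by_cases hmemu : u ∈ A.kocc ∪ D
      · rw [Finset.union_insert, Finset.insert_eq_self.2 hmemu]
        exact ih
      · have himg : (A.kocc ∪ insert u D).image (Sum.inr : ℕ → ℕ ⊕ ℕ)
            = insert (Sum.inr u) ((A.kocc ∪ D).image Sum.inr) := by
          rw [Finset.union_insert, Finset.image_insert]
        rw [himg]
        have hnin : (Sum.inr u : ℕ ⊕ ℕ) ∉ (A.kocc ∪ D).image Sum.inr := by
          intro hc
          obtain ⟨a, ha, heq⟩ := Finset.mem_image.1 hc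
          exact hmemu ((Sum.inr.inj heq) ▸ ha)
        have hna : u ∉ A.kocc := fun hc => hmemu (Finset.mem_union_left _ hc)
        refine ClosedTableau.step
          (TabRule.exp u (Set.mem_insert _ _) (xpar_image_inr _) hnin hna) ?_
        rintro T' hT'; simp only [List.mem_singleton] at hT'; subst hT'
        refine closedTableau_mono ih ?_ (((hTfin.insert _).insert _))
        intro F hF
        rcases hF with rfl | hF
        · exact Set.mem_insert _ _
        · exact Set.mem_insert_of_mem _ (Set.mem_insert_of_mem _ hF)

/-- condition E4 for the canonical evidence function
`E(t) = {A | ¬t:_{Par(A)} A ∉ Γ}`. -/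
theorem canonical_E4
    (CS : Set (ℕ × Fm Empty)) (hCS : ConstantSpec CS)
    (Γ : Set (Fm ℕ)) (hclosed : ∀ F ∈ Γ, F.Closed)
    (hmax : MaximalCons CS Γ) (hE : EComplete Γ)
    (t : Tm) (A : Fm ℕ) (X : Finset ℕ)
    (hA : A ∈ canE Γ t) (hX : A.kocc ⊆ X) :
    Fm.just t (X.image Sum.inr) A ∈ canE Γ (Tm.bang t) := by
  simp only [canE, Set.mem_setOf_eq] at hA ⊢
  rw [kocc_just_image t X A hX]
  intro hB
  -- hB : ¬!t:X (t:X A) ∈ Γ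
  set negF := Fm.neg (Fm.just t (A.kocc.image Sum.inr) A) with hnegF
  -- Γ ∪ {negF} is inconsistent
  have hincons : ¬ TabConsistent CS (insert negF Γ) := by
    intro hc
    apply hA
    have heq : insert negF Γ = Γ := by
      refine hmax.2 _ (Set.subset_insert _ _) ?_ hc
      rintro F (rfl | hF)
      · exact closed_neg_just_image t A.kocc A
      · exact hclosed F hF
    rw [← heq]
    exact Set.mem_insert _ _
  simp only [TabConsistent, not_forall, not_not] at hincons
  obtain ⟨S₀, hsub₀, hfin₀, hct₀⟩ := hincons
  -- move to insert negF (S₀ \ {negF})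
  have hS1 : ClosedTableau CS (insert negF (S₀ \ {negF})) := by
    refine closedTableau_mono hct₀ ?_ ((hfin₀.diff).insert _)
    intro F hF
    by_cases h : F = negF
    · exact h ▸ Set.mem_insert _ _
    · exact Set.mem_insert_of_mem _ ⟨hF, h⟩
  set Bneg := Fm.neg (Fm.just (Tm.bang t) (X.image Sum.inr) (Fm.just t (X.image Sum.inr) A))
    with hBneg
  set T : Set (Fm ℕ) := insert Bneg (S₀ \ {negF}) with hT
  have hTfin : T.Finite := (hfin₀.diff).insert _
  have hTsub : T ⊆ Γ := by
    rintro F (rfl | hF)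
    · exact hB
    · rcases hsub₀ hF.1 with h | h
      · exact absurd h hF.2
      · exact h
  -- base of the chain on T
  have hbase : ClosedTableau CS (insert negF T) := by
    refine closedTableau_mono hS1 ?_ (hTfin.insert _)
    intro F hF
    rcases hF with rfl | hF
    · exact Set.mem_insert _ _
    · exact Set.mem_insert_of_mem _ (Set.mem_insert_of_mem _ hF)
  have hchain := exp_chain CS t A T hTfin hbase X
  rw [Finset.union_eq_right.2 hX] at hchain
  -- close T via the F! rule
  have hTct : ClosedTableau CS T := by
    refine ClosedTableau.step (TabRule.fbang (Set.mem_insert _ _) (xpar_image_inr X)) ?_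
    rintro T' hT'; simp only [List.mem_singleton] at hT'; subst hT'
    exact hchain
  exact hmax.1 T hTsub hTfin hTct
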